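/- For every continuous conical function f : E → ℝ and every ε > 0 there exist a continuous conical function g : E → ℝ, finitely many closed convex cones σ_1, …, σ_m whose union is E, and vectors s_1, …, s_m ∈ ℚ^d ⊆ E such that g(x) = ⟪s_i, x⟫ for all x ∈ σ_i (1 ≤ i ≤ m), and |f(x) − g(x)| ≤ ε‖x‖ for all x ∈ E. That is, rational piecewise linear conical functions are dense in the space of continuous conical functions with respect to the C-norm. -/

import Mathlib

open Set

noncomputable section

/-- `f` is conical: positively homogeneous of degree 1. -/
def Conical (d : ℕ) (f : EuclideanSpace ℝ (Fin d) → ℝ) : Prop :=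
  ∀ c : ℝ, 0 ≤ c → ∀ x, f (c • x) = c * f x

/-- The rational point of `ℝ^d` with coordinates `q`. -/
noncomputable def ratToE (d : ℕ) (q : Fin d → ℚ) : EuclideanSpace ℝ (Fin d) :=
  (WithLp.equiv 2 (Fin d → ℝ)).symm fun i => (q i : ℝ)

namespace Stmt16Aux

variable {d : ℕ}

abbrev E (d : ℕ) := EuclideanSpace ℝ (Fin d)

lemma ratToE_apply (q : Fin d → ℚ) (i : Fin d) : ratToE d q i = (q i : ℝ) := rfl

lemma ratToE_sub (p q : Fin d → ℚ) : ratToE d (p - q) = ratToE d p - ratToE d q := by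
  ext i
  show ((p i - q i : ℚ) : ℝ) = (p i : ℝ) - (q i : ℝ)
  push_cast; ring

lemma ratToE_neg (q : Fin d → ℚ) : ratToE d (-q) = - ratToE d q := by
  ext i
  show ((-(q i) : ℚ) : ℝ) = -(q i : ℝ)
  push_cast; ring

/-- The "piecewise rational linear on a conical fan" property. -/
def PW (d : ℕ) (g : EuclideanSpace ℝ (Fin d) → ℝ) : Prop :=
  ∃ m : ℕ, ∃ σ : Fin m → Set (EuclideanSpace ℝ (Fin d)), ∃ s : Fin m → (Fin d → ℚ),
    (∀ i, IsClosed (σ i) ∧ Convex ℝ (σ i) ∧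
      ∀ c : ℝ, 0 ≤ c → ∀ x ∈ σ i, c • x ∈ σ i) ∧
    (⋃ i, σ i) = Set.univ ∧
    (∀ i, ∀ x ∈ σ i, g x = (inner ℝ (ratToE d (s i)) x : ℝ))

def PG (d : ℕ) (g : EuclideanSpace ℝ (Fin d) → ℝ) : Prop :=
  Continuous g ∧ Conical d g ∧ PW d g

lemma halfspace_props (u : E d) :
    IsClosed {x : E d | 0 ≤ (inner ℝ u x : ℝ)} ∧ Convex ℝ {x : E d | 0 ≤ (inner ℝ u x : ℝ)} ∧
      ∀ c : ℝ, 0 ≤ c → ∀ x ∈ {x : E d | 0 ≤ (inner ℝ u x : ℝ)},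
        c • x ∈ {x : E d | 0 ≤ (inner ℝ u x : ℝ)} := by
  refine ⟨isClosed_le continuous_const (continuous_const.inner continuous_id), ?_, ?_⟩
  · intro x hx y hy a b ha hb _
    simp only [Set.mem_setOf_eq] at *
    rw [inner_add_right, real_inner_smul_right, real_inner_smul_right]
    have := mul_nonneg ha hx
    have := mul_nonneg hb hy
    linarith
  · intro c hc x hx
    simp only [Set.mem_setOf_eq] at *
    rw [real_inner_smul_right]
    exact mul_nonneg hc hx

lemma PG_lin (q : Fin d → ℚ) : PG d (fun x => (inner ℝ (ratToE d q) x : ℝ)) := by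
  refine ⟨continuous_const.inner continuous_id, ?_, ?_⟩
  · intro c hc x
    exact real_inner_smul_right _ _ _
  · exact ⟨1, fun _ => Set.univ, fun _ => q,
      fun i => ⟨isClosed_univ, convex_univ, fun c _ x _ => trivial⟩,
      Set.iUnion_const _, fun i x _ => rfl⟩

lemma PG_neg {g : E d → ℝ} (hg : PG d g) : PG d (fun x => -(g x)) := by
  obtain ⟨hc, hcon, m, σ, s, hσ, hcov, hval⟩ := hg
  refine ⟨hc.neg, ?_, m, σ, fun i => -(s i), hσ, hcov, ?_⟩
  · intro c hc x
    show -(g (c • x)) = c * -(g x)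
    rw [hcon c hc x]; ring
  · intro i x hx
    show -(g x) = (inner ℝ (ratToE d (-(s i))) x : ℝ)
    rw [hval i x hx, ratToE_neg, inner_neg_left]

lemma PG_max {g₁ g₂ : E d → ℝ} (h₁ : PG d g₁) (h₂ : PG d g₂) :
    PG d (fun x => max (g₁ x) (g₂ x)) := by
  obtain ⟨hc₁, hcon₁, m₁, σ, s, hσ, hcov₁, hval₁⟩ := h₁
  obtain ⟨hc₂, hcon₂, m₂, τ, t, hτ, hcov₂, hval₂⟩ := h₂
  refine ⟨hc₁.max hc₂, ?_, ?_⟩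
  · intro c hc x
    show max (g₁ (c • x)) (g₂ (c • x)) = c * max (g₁ x) (g₂ x)
    rw [hcon₁ c hc x, hcon₂ c hc x, mul_max_of_nonneg _ _ hc]
  · classical
    let ι := Fin m₁ × Fin m₂ × Bool
    let W : ι → (Fin d → ℚ) := fun p => cond p.2.2 (s p.1 - t p.2.1) (t p.2.1 - s p.1)
    let L : ι → (Fin d → ℚ) := fun p => cond p.2.2 (s p.1) (t p.2.1)
    let R : ι → Set (E d) :=
      fun p => σ p.1 ∩ τ p.2.1 ∩ {x | 0 ≤ (inner ℝ (ratToE d (W p)) x : ℝ)}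
    have e : Fin (Fintype.card ι) ≃ ι := (Fintype.equivFin ι).symm
    have key : ∀ p : ι, ∀ x ∈ R p, max (g₁ x) (g₂ x) = (inner ℝ (ratToE d (L p)) x : ℝ) := by
      rintro ⟨i, j, b⟩ x ⟨⟨hxi, hxj⟩, hxh⟩
      have e1 := hval₁ i x hxi
      have e2 := hval₂ j x hxj
      cases b with
      | true =>
        have h0 : (0:ℝ) ≤ inner ℝ (ratToE d (s i - t j)) x := hxh
        rw [ratToE_sub, inner_sub_left] at h0
        show max (g₁ x) (g₂ x) = (inner ℝ (ratToE d (s i)) x : ℝ)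
        rw [e1, e2]
        exact max_eq_left (by linarith)
      | false =>
        have h0 : (0:ℝ) ≤ inner ℝ (ratToE d (t j - s i)) x := hxh
        rw [ratToE_sub, inner_sub_left] at h0
        show max (g₁ x) (g₂ x) = (inner ℝ (ratToE d (t j)) x : ℝ)
        rw [e1, e2]
        exact max_eq_right (by linarith)
    refine ⟨Fintype.card ι, fun k => R (e k), fun k => L (e k), ?_, ?_, ?_⟩
    · intro k
      obtain ⟨H1, H2, H3⟩ := halfspace_props (ratToE d (W (e k)))
      refine ⟨((hσ _).1.inter (hτ _).1).inter H1,
        (((hσ _).2.1.inter (hτ _).2.1).inter H2), ?_⟩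
      intro c hc x hx
      exact ⟨⟨(hσ _).2.2 c hc x hx.1.1, (hτ _).2.2 c hc x hx.1.2⟩, H3 c hc x hx.2⟩
    · rw [e.surjective.iUnion_comp (fun p => R p)]
      apply Set.eq_univ_of_forall
      intro x
      have hx1 : x ∈ ⋃ i, σ i := hcov₁ ▸ Set.mem_univ x
      have hx2 : x ∈ ⋃ j, τ j := hcov₂ ▸ Set.mem_univ x
      obtain ⟨_, ⟨i, rfl⟩, hi⟩ := hx1
      obtain ⟨_, ⟨j, rfl⟩, hj⟩ := hx2
      rcases le_total 0 (inner ℝ (ratToE d (s i - t j)) x : ℝ) with h | h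
      · exact Set.mem_iUnion.2 ⟨(i, j, true), ⟨hi, hj⟩, h⟩
      · refine Set.mem_iUnion.2 ⟨(i, j, false), ⟨hi, hj⟩, ?_⟩
        show (0 : ℝ) ≤ inner ℝ (ratToE d (t j - s i)) x
        rw [ratToE_sub, inner_sub_left] at h ⊢
        linarith
    · intro k x hx
      exact key (e k) x hx

lemma PG_min {g₁ g₂ : E d → ℝ} (h₁ : PG d g₁) (h₂ : PG d g₂) :
    PG d (fun x => min (g₁ x) (g₂ x)) := by
  have h := PG_neg (PG_max (PG_neg h₁) (PG_neg h₂))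
  convert h using 2 with x
  rw [max_neg_neg, neg_neg]

/-- Syntax trees for max-min combinations of (real) linear forms. -/
inductive MM (d : ℕ) : Type where
  | lin : EuclideanSpace ℝ (Fin d) → MM d
  | mx : MM d → MM d → MM d
  | mn : MM d → MM d → MM d

noncomputable def MM.eval : MM d → E d → ℝ
  | MM.lin v => fun x => (inner ℝ v x : ℝ)
  | MM.mx a b => fun x => max (a.eval x) (b.eval x)
  | MM.mn a b => fun x => min (a.eval x) (b.eval x)

lemma MM.eval_continuous (t : MM d) : Continuous t.eval := by
  induction t with
  | lin v => exact continuous_const.inner continuous_id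
  | mx a b ha hb => exact ha.max hb
  | mn a b ha hb => exact ha.min hb

lemma MM.eval_conical (t : MM d) : Conical d t.eval := by
  induction t with
  | lin v =>
    intro c hc x
    show (inner ℝ v (c • x) : ℝ) = c * (inner ℝ v x : ℝ)
    exact real_inner_smul_right _ _ _
  | mx a b ha hb =>
    intro c hc x
    show max (a.eval (c • x)) (b.eval (c • x)) = c * max (a.eval x) (b.eval x)
    rw [ha c hc x, hb c hc x, mul_max_of_nonneg _ _ hc]
  | mn a b ha hb =>
    intro c hc x
    show min (a.eval (c • x)) (b.eval (c • x)) = c * min (a.eval x) (b.eval x)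
    rw [ha c hc x, hb c hc x, mul_min_of_nonneg _ _ hc]

lemma exists_rat_vec_near (v : E d) {ε : ℝ} (hε : 0 < ε) :
    ∃ q : Fin d → ℚ, ‖v - ratToE d q‖ ≤ ε := by
  set δ : ℝ := ε / (d + 1) with hδ
  have hδpos : 0 < δ := div_pos hε (by positivity)
  choose q hq using fun i => exists_rat_near (v i) hδpos
  refine ⟨q, ?_⟩
  have hnorm : ‖v - ratToE d q‖ = Real.sqrt (∑ i, ‖(v - ratToE d q) i‖ ^ 2) :=
    EuclideanSpace.norm_eq _
  rw [hnorm]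
  have hsum : (∑ i, ‖(v - ratToE d q) i‖ ^ 2) ≤ (d : ℝ) * δ ^ 2 := by
    have : ∀ i ∈ Finset.univ, ‖(v - ratToE d q) i‖ ^ 2 ≤ δ ^ 2 := by
      intro i _
      have h1 : (v - ratToE d q) i = v i - (q i : ℝ) := rfl
      rw [h1, Real.norm_eq_abs, sq_abs]
      have := (hq i).le
      nlinarith [abs_nonneg (v i - (q i : ℝ)), abs_le.mp ((hq i).le)]
    calc (∑ i, ‖(v - ratToE d q) i‖ ^ 2) ≤ ∑ _i : Fin d, δ ^ 2 :=
          Finset.sum_le_sum this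
      _ = (d : ℝ) * δ ^ 2 := by simp [mul_comm]
  have hle : (d : ℝ) * δ ^ 2 ≤ ε ^ 2 := by
    have h1 : δ * ((d : ℝ) + 1) = ε := by
      rw [hδ]; field_simp
    nlinarith [sq_nonneg δ, hδpos.le, Nat.cast_nonneg (α := ℝ) d]
  calc Real.sqrt (∑ i, ‖(v - ratToE d q) i‖ ^ 2) ≤ Real.sqrt (ε ^ 2) :=
        Real.sqrt_le_sqrt (le_trans hsum hle)
    _ = ε := Real.sqrt_sq hε.le

lemma approx_rat (t : MM d) {ε : ℝ} (hε : 0 < ε) :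
    ∃ g : E d → ℝ, PG d g ∧ ∀ x, |t.eval x - g x| ≤ ε * ‖x‖ := by
  induction t with
  | lin v =>
    obtain ⟨q, hq⟩ := exists_rat_vec_near v hε
    refine ⟨fun x => (inner ℝ (ratToE d q) x : ℝ), PG_lin q, ?_⟩
    intro x
    show |(inner ℝ v x : ℝ) - (inner ℝ (ratToE d q) x : ℝ)| ≤ ε * ‖x‖
    rw [← inner_sub_left]
    calc |(inner ℝ (v - ratToE d q) x : ℝ)| ≤ ‖v - ratToE d q‖ * ‖x‖ :=
          abs_real_inner_le_norm _ _
      _ ≤ ε * ‖x‖ := mul_le_mul_of_nonneg_right hq (norm_nonneg x)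
  | mx a b ha hb =>
    obtain ⟨g₁, hg₁, hb₁⟩ := ha
    obtain ⟨g₂, hg₂, hb₂⟩ := hb
    refine ⟨fun x => max (g₁ x) (g₂ x), PG_max hg₁ hg₂, ?_⟩
    intro x
    calc |max (a.eval x) (b.eval x) - max (g₁ x) (g₂ x)|
        ≤ max |a.eval x - g₁ x| |b.eval x - g₂ x| := abs_max_sub_max_le_max _ _ _ _
      _ ≤ ε * ‖x‖ := max_le (hb₁ x) (hb₂ x)
  | mn a b ha hb =>
    obtain ⟨g₁, hg₁, hb₁⟩ := ha
    obtain ⟨g₂, hg₂, hb₂⟩ := hb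
    refine ⟨fun x => min (g₁ x) (g₂ x), PG_min hg₁ hg₂, ?_⟩
    intro x
    calc |min (a.eval x) (b.eval x) - min (g₁ x) (g₂ x)|
        ≤ max |a.eval x - g₁ x| |b.eval x - g₂ x| := abs_min_sub_min_le_max _ _ _ _
      _ ≤ ε * ‖x‖ := max_le (hb₁ x) (hb₂ x)

end Stmt16Aux

/-- Rational piecewise linear conical functions are dense, in the C-norm, in the space of
continuous conical functions: every continuous conical `f` is `ε‖·‖`-approximated by a
continuous conical `g` which is given by rational linear forms on finitely many closed
convex cones covering `ℝ^d`. -/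
theorem stmt_16 (d : ℕ) (hd : 1 ≤ d)
    (f : EuclideanSpace ℝ (Fin d) → ℝ)
    (hc : Continuous f) (hcon : Conical d f) (ε : ℝ) (hε : 0 < ε) :
    ∃ g : EuclideanSpace ℝ (Fin d) → ℝ, Continuous g ∧ Conical d g ∧
      ∃ m : ℕ, ∃ σ : Fin m → Set (EuclideanSpace ℝ (Fin d)), ∃ s : Fin m → (Fin d → ℚ),
        (∀ i, IsClosed (σ i) ∧ Convex ℝ (σ i) ∧
          ∀ c : ℝ, 0 ≤ c → ∀ x ∈ σ i, c • x ∈ σ i) ∧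
        (⋃ i, σ i) = Set.univ ∧
        (∀ i, ∀ x ∈ σ i, g x = (inner ℝ (ratToE d (s i)) x : ℝ)) ∧
        (∀ x, |f x - g x| ≤ ε * ‖x‖) := by
  classical
  haveI : Nonempty (Fin d) := ⟨⟨0, hd⟩⟩
  set S := Metric.sphere (0 : EuclideanSpace ℝ (Fin d)) 1 with hS_def
  let L : Set C(S, ℝ) := {h | ∃ t : Stmt16Aux.MM d, ∀ x : S, h x = t.eval x}
  have hLne : L.Nonempty :=
    ⟨⟨fun z : S => (Stmt16Aux.MM.lin (0 : EuclideanSpace ℝ (Fin d))).eval z,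
      (Stmt16Aux.MM.eval_continuous _).comp continuous_subtype_val⟩,
      ⟨Stmt16Aux.MM.lin 0, fun z => rfl⟩⟩
  have hinf : ∀ h₁ ∈ L, ∀ h₂ ∈ L, h₁ ⊓ h₂ ∈ L := by
    rintro h₁ ⟨t₁, ht₁⟩ h₂ ⟨t₂, ht₂⟩
    refine ⟨t₁.mn t₂, fun z => ?_⟩
    show min (h₁ z) (h₂ z) = min (t₁.eval z) (t₂.eval z)
    rw [ht₁ z, ht₂ z]
  have hsup : ∀ h₁ ∈ L, ∀ h₂ ∈ L, h₁ ⊔ h₂ ∈ L := by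
    rintro h₁ ⟨t₁, ht₁⟩ h₂ ⟨t₂, ht₂⟩
    refine ⟨t₁.mx t₂, fun z => ?_⟩
    show max (h₁ z) (h₂ z) = max (t₁.eval z) (t₂.eval z)
    rw [ht₁ z, ht₂ z]
  have hsep : L.SeparatesPointsStrongly := by
    intro v x y
    set a := v x with ha_def
    set b := v y with hb_def
    have hx1 : ‖(x : EuclideanSpace ℝ (Fin d))‖ = 1 := mem_sphere_zero_iff_norm.mp x.2
    have hy1 : ‖(y : EuclideanSpace ℝ (Fin d))‖ = 1 := mem_sphere_zero_iff_norm.mp y.2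
    have hxx : (inner ℝ (x : EuclideanSpace ℝ (Fin d)) (x : EuclideanSpace ℝ (Fin d)) : ℝ) = 1 := by
      rw [real_inner_self_eq_norm_sq, hx1]; norm_num
    have hyy : (inner ℝ (y : EuclideanSpace ℝ (Fin d)) (y : EuclideanSpace ℝ (Fin d)) : ℝ) = 1 := by
      rw [real_inner_self_eq_norm_sq, hy1]; norm_num
    by_cases hxy : (y : EuclideanSpace ℝ (Fin d)) = (x : EuclideanSpace ℝ (Fin d))
    · -- same point
      have hyx : y = x := Subtype.ext hxy
      subst hyx
      refine ⟨⟨fun z : S => (Stmt16Aux.MM.lin (a • (y : EuclideanSpace ℝ (Fin d)))).eval z,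
        (Stmt16Aux.MM.eval_continuous _).comp continuous_subtype_val⟩,
        ⟨_, fun z => rfl⟩, ?_, ?_⟩ <;>
      · show (inner ℝ (a • (y : EuclideanSpace ℝ (Fin d))) (y : EuclideanSpace ℝ (Fin d)) : ℝ) = a
        rw [real_inner_smul_left, hyy, mul_one]
    · by_cases hxy' : (y : EuclideanSpace ℝ (Fin d)) = -(x : EuclideanSpace ℝ (Fin d))
      · -- antipodal
        set X : EuclideanSpace ℝ (Fin d) := (x : EuclideanSpace ℝ (Fin d)) with hX
        have e1x : (Stmt16Aux.MM.lin (a • X)).eval x = a := by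
          show (inner ℝ (a • X) X : ℝ) = a
          rw [real_inner_smul_left, hxx, mul_one]
        have e1y : (Stmt16Aux.MM.lin (a • X)).eval y = -a := by
          show (inner ℝ (a • X) (y : EuclideanSpace ℝ (Fin d)) : ℝ) = -a
          rw [hxy', real_inner_smul_left, inner_neg_right, hxx]; ring
        have e2x : (Stmt16Aux.MM.lin ((-b) • X)).eval x = -b := by
          show (inner ℝ ((-b) • X) X : ℝ) = -b
          rw [real_inner_smul_left, hxx, mul_one]
        have e2y : (Stmt16Aux.MM.lin ((-b) • X)).eval y = b := by
          show (inner ℝ ((-b) • X) (y : EuclideanSpace ℝ (Fin d)) : ℝ) = b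
          rw [hxy', real_inner_smul_left, inner_neg_right, hxx]; ring
        rcases le_total 0 (a + b) with hab | hab
        · refine ⟨⟨fun z : S =>
              ((Stmt16Aux.MM.lin (a • X)).mx (Stmt16Aux.MM.lin ((-b) • X))).eval z,
            (Stmt16Aux.MM.eval_continuous _).comp continuous_subtype_val⟩,
            ⟨_, fun z => rfl⟩, ?_, ?_⟩
          · show max ((Stmt16Aux.MM.lin (a • X)).eval x)
                ((Stmt16Aux.MM.lin ((-b) • X)).eval x) = a
            rw [e1x, e2x]
            exact max_eq_left (by linarith)
          · show max ((Stmt16Aux.MM.lin (a • X)).eval y)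
                ((Stmt16Aux.MM.lin ((-b) • X)).eval y) = b
            rw [e1y, e2y]
            exact max_eq_right (by linarith)
        · refine ⟨⟨fun z : S =>
              ((Stmt16Aux.MM.lin (a • X)).mn (Stmt16Aux.MM.lin ((-b) • X))).eval z,
            (Stmt16Aux.MM.eval_continuous _).comp continuous_subtype_val⟩,
            ⟨_, fun z => rfl⟩, ?_, ?_⟩
          · show min ((Stmt16Aux.MM.lin (a • X)).eval x)
                ((Stmt16Aux.MM.lin ((-b) • X)).eval x) = a
            rw [e1x, e2x]
            exact min_eq_left (by linarith)
          · show min ((Stmt16Aux.MM.lin (a • X)).eval y)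
                ((Stmt16Aux.MM.lin ((-b) • X)).eval y) = b
            rw [e1y, e2y]
            exact min_eq_right (by linarith)
      · -- linearly independent
        set X : EuclideanSpace ℝ (Fin d) := (x : EuclideanSpace ℝ (Fin d)) with hX
        set Y : EuclideanSpace ℝ (Fin d) := (y : EuclideanSpace ℝ (Fin d)) with hY
        set c : ℝ := (inner ℝ X Y : ℝ) with hc_def
        have hXY : (inner ℝ X Y : ℝ) = c := hc_def.symm
        have hYX : (inner ℝ Y X : ℝ) = c := by rw [real_inner_comm]
        set u : EuclideanSpace ℝ (Fin d) := Y - c • X with hu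
        have hux : (inner ℝ u X : ℝ) = 0 := by
          rw [hu, inner_sub_left, real_inner_smul_left, hxx, hYX]; ring
        have huy : (inner ℝ u Y : ℝ) = 1 - c ^ 2 := by
          rw [hu, inner_sub_left, real_inner_smul_left, hyy, hXY]; ring
        have hune : u ≠ 0 := by
          intro h0
          have hYc : Y = c • X := by
            have := sub_eq_zero.mp h0; exact this
          have habs : |c| = 1 := by
            have : ‖Y‖ = ‖c • X‖ := by rw [hYc]
            rw [hy1, norm_smul, hx1, mul_one, Real.norm_eq_abs] at this
            exact this.symm
          rcases abs_eq (by norm_num : (0:ℝ) ≤ 1) |>.mp habs with h1 | h1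
          · exact hxy (by rw [hYc, h1, one_smul])
          · exact hxy' (by rw [hYc, h1, neg_one_smul])
        have huu : (inner ℝ u u : ℝ) = 1 - c ^ 2 := by
          rw [hu]
          simp only [inner_sub_left, inner_sub_right, real_inner_smul_left,
            real_inner_smul_right, hxx, hyy, hXY, hYX]
          ring
        have hcne : 1 - c ^ 2 ≠ 0 := by
          intro h0
          have : (inner ℝ u u : ℝ) = 0 := by rw [huu, h0]
          exact hune (inner_self_eq_zero.mp this)
        set k : ℝ := (b - a * c) / (1 - c ^ 2) with hk
        set w : EuclideanSpace ℝ (Fin d) := a • X + k • u with hw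
        refine ⟨⟨fun z : S => (Stmt16Aux.MM.lin w).eval z,
          (Stmt16Aux.MM.eval_continuous _).comp continuous_subtype_val⟩,
          ⟨_, fun z => rfl⟩, ?_, ?_⟩
        · show (inner ℝ w X : ℝ) = a
          rw [hw, inner_add_left, real_inner_smul_left, real_inner_smul_left, hxx, hux]
          ring
        · show (inner ℝ w Y : ℝ) = b
          rw [hw, inner_add_left, real_inner_smul_left, real_inner_smul_left, huy, ← hc_def,
            hk, div_mul_cancel₀ _ hcne]
          ring
  have hclos := ContinuousMap.sublattice_closure_eq_top L hLne hinf hsup hsep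
  let fS : C(S, ℝ) := ⟨fun z : S => f z, hc.comp continuous_subtype_val⟩
  have hfS : fS ∈ closure L := by rw [hclos]; trivial
  obtain ⟨h, hhL, hdist⟩ := Metric.mem_closure_iff.mp hfS (ε / 2) (by positivity)
  obtain ⟨t, ht⟩ := hhL
  have hSb : ∀ z : S, |f (z : EuclideanSpace ℝ (Fin d)) - t.eval z| ≤ ε / 2 := by
    intro z
    have h2 : dist (fS z) (h z) ≤ dist fS h := ContinuousMap.dist_apply_le_dist z
    rw [ht z] at h2
    have h3 : dist (fS z) (t.eval (z : EuclideanSpace ℝ (Fin d)))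
        = |f (z : EuclideanSpace ℝ (Fin d)) - t.eval (z : EuclideanSpace ℝ (Fin d))| :=
      Real.dist_eq _ _
    exact le_trans (le_of_eq h3.symm) (h2.trans hdist.le)
  have hglob : ∀ z, |f z - t.eval z| ≤ ε / 2 * ‖z‖ := by
    intro z
    rcases eq_or_ne z 0 with rfl | hz
    · have hf0 : f 0 = 0 := by
        have := hcon 0 le_rfl 0; simpa using this
      have he0 : t.eval 0 = 0 := by
        have := t.eval_conical 0 le_rfl 0; simpa using this
      simp [hf0, he0]
    · have hnz : ‖z‖ ≠ 0 := norm_ne_zero_iff.mpr hz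
      have hnpos : 0 < ‖z‖ := norm_pos_iff.mpr hz
      set yv : EuclideanSpace ℝ (Fin d) := ‖z‖⁻¹ • z with hyv
      have hyn : ‖yv‖ = 1 := norm_smul_inv_norm hz
      have hyS : yv ∈ S := by rw [hS_def, mem_sphere_zero_iff_norm]; exact hyn
      have hzy : z = ‖z‖ • yv := by rw [hyv, smul_inv_smul₀ hnz]
      have h1 : f z = ‖z‖ * f yv := by
        nth_rewrite 1 [hzy]; exact hcon _ (norm_nonneg z) yv
      have h2 : t.eval z = ‖z‖ * t.eval yv := by
        nth_rewrite 1 [hzy]; exact t.eval_conical _ (norm_nonneg z) yv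
      calc |f z - t.eval z| = ‖z‖ * |f yv - t.eval yv| := by
            rw [h1, h2, ← mul_sub, abs_mul, abs_of_nonneg (norm_nonneg z)]
        _ ≤ ‖z‖ * (ε / 2) := mul_le_mul_of_nonneg_left (hSb ⟨yv, hyS⟩) (norm_nonneg z)
        _ = ε / 2 * ‖z‖ := mul_comm _ _
  obtain ⟨g, ⟨hgc, hgcon, m, σ, s, hA, hB, hC⟩, hgap⟩ :=
    Stmt16Aux.approx_rat t (half_pos hε)
  refine ⟨g, hgc, hgcon, m, σ, s, hA, hB, hC, ?_⟩
  intro z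
  calc |f z - g z| ≤ |f z - t.eval z| + |t.eval z - g z| := abs_sub_le _ _ _
    _ ≤ ε / 2 * ‖z‖ + ε / 2 * ‖z‖ := add_le_add (hglob z) (hgap z)
    _ = ε * ‖z‖ := by ring
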